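/- The Yellowstone sequence a is a permutation of the positive integers: the map n ↦ a(n) is a bijection from ℕ≥1 to ℕ≥1. -/

import Mathlib

/-- The Yellowstone sequence: a 1 = 1, a 2 = 2, a 3 = 3, and for n ≥ 4,
`a n` is the least positive integer not among `a 1, …, a (n-1)` which shares
a common factor with `a (n-2)` and is coprime to `a (n-1)`. -/
def IsYellowstone (a : ℕ → ℕ) : Prop :=
  a 1 = 1 ∧ a 2 = 2 ∧ a 3 = 3 ∧
  ∀ n, 4 ≤ n →
    IsLeast {k : ℕ | 0 < k ∧ (∀ m, 1 ≤ m → m < n → a m ≠ k) ∧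
      1 < Nat.gcd k (a (n - 2)) ∧ Nat.gcd k (a (n - 1)) = 1} (a n)

namespace YSAux

variable {a : ℕ → ℕ}

/-- Shifted form of the defining property, avoiding natural subtraction. -/
lemma spec (ha : IsYellowstone a) (n : ℕ) (hn : 2 ≤ n) :
    IsLeast {k : ℕ | 0 < k ∧ (∀ m, 1 ≤ m → m < n + 2 → a m ≠ k) ∧
      1 < Nat.gcd k (a n) ∧ Nat.gcd k (a (n + 1)) = 1} (a (n + 2)) := by
  have h := ha.2.2.2 (n + 2) (by omega)
  have h2 : n + 2 - 2 = n := by omega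
  have h1 : n + 2 - 1 = n + 1 := by omega
  rw [h2, h1] at h
  exact h

lemma pos (ha : IsYellowstone a) : ∀ n, 1 ≤ n → 1 ≤ a n := by
  intro n hn
  rcases lt_or_ge n 4 with h | h
  · interval_cases n
    · simp [ha.1]
    · simp [ha.2.1]
    · simp [ha.2.2.1]
  · obtain ⟨m, rfl⟩ : ∃ m, n = m + 2 := ⟨n - 2, by omega⟩
    exact (spec ha m (by omega)).1.1

lemma ne_of_lt (ha : IsYellowstone a) : ∀ m n, 1 ≤ m → m < n → a m ≠ a n := by
  intro m n hm hmn
  rcases lt_or_ge n 4 with h | h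
  · interval_cases n <;> interval_cases m <;>
      simp [ha.1, ha.2.1, ha.2.2.1]
  · obtain ⟨n', rfl⟩ : ∃ n', n = n' + 2 := ⟨n - 2, by omega⟩
    exact fun heq => (spec ha n' (by omega)).1.2.1 m hm hmn heq

lemma injOn (ha : IsYellowstone a) : Set.InjOn a {n : ℕ | 1 ≤ n} := by
  intro m hm n hn h
  by_contra hne
  rcases lt_trichotomy m n with h' | h' | h'
  · exact ne_of_lt ha m n hm h' h
  · exact hne h'
  · exact ne_of_lt ha n m hn h' h.symm

lemma two_le (ha : IsYellowstone a) : ∀ n, 2 ≤ n → 2 ≤ a n := by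
  intro n hn
  have h1 := ne_of_lt ha 1 n le_rfl (by omega)
  rw [ha.1] at h1
  have h2 := pos ha n (by omega)
  omega

lemma coprime_consec (ha : IsYellowstone a) :
    ∀ n, 2 ≤ n → Nat.gcd (a (n + 1)) (a n) = 1 := by
  intro n hn
  rcases eq_or_lt_of_le hn with h | h
  · rw [← h, ha.2.2.1, ha.2.1]
    decide
  · obtain ⟨m, rfl⟩ : ∃ m, n = m + 1 := ⟨n - 1, by omega⟩
    exact (spec ha m (by omega)).1.2.2.2

lemma rel (ha : IsYellowstone a) : ∀ n, 2 ≤ n → 1 < Nat.gcd (a (n + 2)) (a n) :=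
  fun n hn => (spec ha n hn).1.2.2.1

lemma le_of_candidate (ha : IsYellowstone a) (n : ℕ) (hn : 2 ≤ n) (c : ℕ) (hc : 0 < c)
    (hnew : ∀ m, 1 ≤ m → m < n + 2 → a m ≠ c) (hrel : 1 < Nat.gcd c (a n))
    (hcop : Nat.gcd c (a (n + 1)) = 1) : a (n + 2) ≤ c :=
  (spec ha n hn).2 ⟨hc, hnew, hrel, hcop⟩

/-- Pigeonhole: the (injective) sequence cannot be bounded on an infinite set of indices. -/
lemma not_bdd (ha : IsYellowstone a) (C : ℕ)
    (h : ∀ M, ∃ n, M ≤ n ∧ 1 ≤ n ∧ a n ≤ C) : False := by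
  have hinf : ({n : ℕ | 1 ≤ n ∧ a n ≤ C}).Infinite := by
    apply Set.infinite_of_forall_exists_gt
    intro M
    obtain ⟨n, h1, h2, h3⟩ := h (M + 1)
    exact ⟨n, ⟨h2, h3⟩, by omega⟩
  have himg : a '' {n : ℕ | 1 ≤ n ∧ a n ≤ C} ⊆ Set.Icc 1 C := by
    rintro x ⟨n, ⟨h1, h2⟩, rfl⟩
    exact ⟨pos ha n h1, h2⟩
  have hfin : ({n : ℕ | 1 ≤ n ∧ a n ≤ C}).Finite :=
    Set.Finite.of_finite_image ((Set.finite_Icc 1 C).subset himg)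
      ((injOn ha).mono (fun n hn => hn.1))
  exact hinf hfin

/-- Upper bound for initial values. -/
def Bnd (a : ℕ → ℕ) (M : ℕ) : ℕ := (Finset.Icc 1 M).sup a

lemma le_Bnd (a : ℕ → ℕ) (M j : ℕ) (h1 : 1 ≤ j) (h2 : j ≤ M) : a j ≤ Bnd a M :=
  Finset.le_sup (Finset.mem_Icc.2 ⟨h1, h2⟩)

/-- There are infinitely many even terms. -/
lemma even_infinite (ha : IsYellowstone a) : ∀ M, ∃ n, M ≤ n ∧ 2 ∣ a n := by
  intro M0
  by_contra hodd
  push_neg at hodd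
  set M := M0 + 2 with hMdef
  have hoddM : ∀ n, M ≤ n → ¬ 2 ∣ a n := fun n hn => hodd n (by omega)
  set B := Bnd a M with hB
  -- key bound after each step
  have key : ∀ n, M ≤ n → a (n + 2) ≤ 2 * max B ((a n).minFac) := by
    intro n hn
    have hu2 : 2 ≤ a n := two_le ha n (by omega)
    have huodd : ¬ 2 ∣ a n := hoddM n hn
    set p := (a n).minFac with hpdef
    have hp : p.Prime := Nat.minFac_prime (by omega)
    have hpu : p ∣ a n := Nat.minFac_dvd _
    have hp2 : p ≠ 2 := fun h => huodd (h ▸ hpu)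
    -- choose exponent
    have hple := hp.two_le
    have hex : ∃ i, B < 2 ^ i * p := by
      refine ⟨B, ?_⟩
      have h1 : B < 2 ^ B := (Nat.lt_two_pow_self (n := B))
      have h2 : 2 ^ B * 1 ≤ 2 ^ B * p := Nat.mul_le_mul_left _ (by omega)
      omega
    obtain ⟨j, hj1, hcgt, hcle⟩ : ∃ j, 1 ≤ j ∧ B < 2 ^ j * p ∧ 2 ^ j * p ≤ 2 * max B p := by
      have hmax1 : B ≤ max B p := le_max_left _ _
      have hmax2 : p ≤ max B p := le_max_right _ _
      have hspec : B < 2 ^ Nat.find hex * p := Nat.find_spec hex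
      rcases Nat.eq_zero_or_pos (Nat.find hex) with h0 | h0
      · rw [h0, pow_zero, one_mul] at hspec
        refine ⟨1, le_rfl, ?_, ?_⟩
        · have : 2 ^ 1 * p = 2 * p := by ring
          omega
        · have : 2 ^ 1 * p = 2 * p := by ring
          omega
      · have hmin : ¬ B < 2 ^ (Nat.find hex - 1) * p := Nat.find_min hex (by omega)
        push_neg at hmin
        have heq : Nat.find hex = (Nat.find hex - 1) + 1 := by omega
        rw [heq] at hspec
        refine ⟨Nat.find hex - 1 + 1, by omega, hspec, ?_⟩
        have : 2 ^ (Nat.find hex - 1 + 1) * p = 2 * (2 ^ (Nat.find hex - 1) * p) := by ring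
        omega
    set c := 2 ^ j * p with hc
    have hceven : 2 ∣ c := Dvd.dvd.mul_right (dvd_pow_self 2 (by omega)) p
    have hnew : ∀ m, 1 ≤ m → m < n + 2 → a m ≠ c := by
      intro m h1 _ heq
      rcases le_or_gt M m with hm | hm
      · exact hoddM m hm (heq ▸ hceven)
      · have := le_Bnd a M m h1 (by omega)
        omega
    have hrel : 1 < Nat.gcd c (a n) := by
      have hdvd : p ∣ Nat.gcd c (a n) := Nat.dvd_gcd (dvd_mul_left p _) hpu
      have := Nat.le_of_dvd (Nat.gcd_pos_of_pos_right c (by omega)) hdvd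
      have := hp.two_le
      omega
    have hcop : Nat.gcd c (a (n + 1)) = 1 := by
      have hcc : Nat.gcd (a (n + 1)) (a n) = 1 := coprime_consec ha n (by omega)
      have h2 : Nat.Coprime 2 (a (n + 1)) :=
        (Nat.Prime.coprime_iff_not_dvd Nat.prime_two).2 (hoddM (n + 1) (by omega))
      have hq : Nat.Coprime p (a (n + 1)) := by
        refine (Nat.Prime.coprime_iff_not_dvd hp).2 (fun hdvd => ?_)
        have : p ∣ Nat.gcd (a (n + 1)) (a n) := Nat.dvd_gcd hdvd hpu
        rw [hcc, Nat.dvd_one] at this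
        exact hp.one_lt.ne' this
      exact Nat.Coprime.mul (Nat.Coprime.pow_left j h2) hq
    have hcpos : 0 < c := Nat.mul_pos (by positivity) (by omega)
    calc a (n + 2) ≤ c := le_of_candidate ha n (by omega) c hcpos hnew hrel hcop
      _ ≤ 2 * max B p := hcle
  -- eventually all least prime factors are large
  obtain ⟨N3, hN3⟩ : ∃ N3, ∀ n, N3 ≤ n → B < (a n).minFac := by
    by_contra h
    push_neg at h
    apply not_bdd ha (2 * B)
    intro M'
    obtain ⟨n, hn1, hn2⟩ := h (max M M')
    refine ⟨n + 2, by omega, by omega, ?_⟩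
    have hkey := key n (le_trans (le_max_left _ _) hn1)
    rwa [max_eq_left hn2] at hkey
  -- eventually all terms are primes dividing the term two back
  set N4 := max N3 M with hN4
  have prime_step : ∀ n, N4 ≤ n → (a (n + 2)).Prime ∧ a (n + 2) ∣ a n := by
    intro n hn
    have hnM : M ≤ n := le_trans (le_max_right _ _) hn
    have hb := key n hnM
    have hpf := hN3 n (le_trans (le_max_left _ _) hn)
    rw [max_eq_right hpf.le] at hb
    set p := (a n).minFac with hpdef
    have hodd2 : ¬ 2 ∣ a (n + 2) := hoddM _ (by omega)
    have hlt : a (n + 2) < 2 * p := lt_of_le_of_ne hb (fun h => hodd2 (h ▸ Dvd.intro p rfl))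
    have hg : 1 < Nat.gcd (a (n + 2)) (a n) := rel ha n (by omega)
    set q := (Nat.gcd (a (n + 2)) (a n)).minFac with hq
    have hqp : q.Prime := Nat.minFac_prime (by omega)
    have hq2 : q ∣ a (n + 2) := (Nat.minFac_dvd _).trans (Nat.gcd_dvd_left _ _)
    have hq0 : q ∣ a n := (Nat.minFac_dvd _).trans (Nat.gcd_dvd_right _ _)
    have hpq : p ≤ q := Nat.minFac_le_of_dvd hqp.two_le hq0
    have hapos : 1 ≤ a (n + 2) := pos ha _ (by omega)
    obtain ⟨t, ht⟩ := hq2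
    have ht1 : t = 1 := by
      rcases Nat.lt_or_ge t 2 with h | h
      · interval_cases t
        · rw [mul_zero] at ht; omega
        · rfl
      · have h2q : q * 2 ≤ q * t := Nat.mul_le_mul_left q h
        omega
    rw [ht1, mul_one] at ht
    exact ⟨ht ▸ hqp, ht ▸ hq0⟩
  have h1 := prime_step N4 le_rfl
  have h2 := prime_step (N4 + 2) (by omega)
  have heq : a (N4 + 2 + 2) = a (N4 + 2) := (Nat.prime_dvd_prime_iff_eq h2.1 h1.1).1 h2.2
  exact ne_of_lt ha (N4 + 2) (N4 + 2 + 2) (by omega) (by omega) heq.symm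

/-- Every prime divides infinitely many terms. -/
lemma prime_dvd_infinite (ha : IsYellowstone a) (q : ℕ) (hq : q.Prime) :
    ∀ M, ∃ n, M ≤ n ∧ q ∣ a n := by
  intro M0
  by_contra h
  push_neg at h
  set M := M0 + 2 with hMdef
  have hM : ∀ n, M ≤ n → ¬ q ∣ a n := fun n hn => h n (by omega)
  set B := Bnd a M with hB
  have hqle := hq.two_le
  set c := 2 ^ (B + 1) * q with hc
  have hcpos : 0 < c := Nat.mul_pos (by positivity) (by omega)
  have hcB : B < c := by
    have h1 : B < 2 ^ B := (Nat.lt_two_pow_self (n := B))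
    have h2 : 2 ^ B ≤ 2 ^ (B + 1) := Nat.pow_le_pow_right (by norm_num) (by omega)
    have h3 : 2 ^ (B + 1) * 1 ≤ 2 ^ (B + 1) * q := Nat.mul_le_mul_left _ (by omega)
    omega
  have hqc : q ∣ c := dvd_mul_left q _
  have hnew : ∀ m, 1 ≤ m → a m ≠ c := by
    intro m h1 heq
    rcases le_or_gt M m with hm | hm
    · exact hM m hm (heq ▸ hqc)
    · have := le_Bnd a M m h1 (by omega)
      omega
  apply not_bdd ha c
  intro M'
  obtain ⟨s, hs1, hs2⟩ := even_infinite ha (max M M')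
  have hsM : M ≤ s := le_trans (le_max_left _ _) hs1
  refine ⟨s + 2, by omega, by omega, ?_⟩
  apply le_of_candidate ha s (by omega) c hcpos (fun m h1 _ => hnew m h1)
  · have hdvd : 2 ∣ Nat.gcd c (a s) :=
      Nat.dvd_gcd (Dvd.dvd.mul_right (dvd_pow_self 2 (by omega)) q) hs2
    have hpos : 0 < a s := pos ha s (by omega)
    have := Nat.le_of_dvd (Nat.gcd_pos_of_pos_right c hpos) hdvd
    omega
  · have hcc : Nat.gcd (a (s + 1)) (a s) = 1 := coprime_consec ha s (by omega)
    have h2 : Nat.Coprime 2 (a (s + 1)) := by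
      refine (Nat.Prime.coprime_iff_not_dvd Nat.prime_two).2 (fun hdvd => ?_)
      have : 2 ∣ Nat.gcd (a (s + 1)) (a s) := Nat.dvd_gcd hdvd hs2
      rw [hcc, Nat.dvd_one] at this
      omega
    have hqcop : Nat.Coprime q (a (s + 1)) :=
      (Nat.Prime.coprime_iff_not_dvd hq).2 (hM (s + 1) (by omega))
    exact Nat.Coprime.mul (Nat.Coprime.pow_left _ h2) hqcop

/-- Every positive integer appears. -/
lemma surj (ha : IsYellowstone a) : ∀ k, 1 ≤ k → ∃ n, 1 ≤ n ∧ a n = k := by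
  intro k
  induction k using Nat.strong_induction_on with
  | _ k IH =>
  intro hk
  by_contra hmiss
  push_neg at hmiss
  have hk1 : k ≠ 1 := fun h => hmiss 1 le_rfl (by rw [ha.1, h])
  have hk2 : 2 ≤ k := by omega
  -- all smaller values appear by some index N
  obtain ⟨N, hN4, hNcov⟩ : ∃ N, 4 ≤ N ∧ ∀ j, 1 ≤ j → j < k →
      ∃ i, 1 ≤ i ∧ i ≤ N ∧ a i = j := by
    classical
    have hidx : ∀ j, 1 ≤ j → j < k → ∃ i, 1 ≤ i ∧ a i = j := fun j h1 h2 => IH j h2 h1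
    set g : ℕ → ℕ := fun j => if h : 1 ≤ j ∧ j < k then (hidx j h.1 h.2).choose else 0 with hg
    refine ⟨max 4 ((Finset.range k).sup g), le_max_left _ _, ?_⟩
    intro j h1 h2
    have hgj : g j = (hidx j h1 h2).choose := dif_pos ⟨h1, h2⟩
    have hch := (hidx j h1 h2).choose_spec
    refine ⟨g j, hgj ▸ hch.1, ?_, hgj ▸ hch.2⟩
    exact le_trans (Finset.le_sup (Finset.mem_range.2 h2)) (le_max_right _ _)
  have hgt : ∀ n, N < n → k < a n := by
    intro n hn
    have h1 : 1 ≤ a n := pos ha n (by omega)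
    have h2 : a n ≠ k := hmiss n (by omega)
    rcases lt_or_ge (a n) k with h | h
    · obtain ⟨i, hi1, hi2, hi3⟩ := hNcov (a n) h1 h
      exact absurd hi3 (ne_of_lt ha i n hi1 (by omega))
    · omega
  -- k is blocked forever: sharing a factor propagates
  have hblock : ∀ n, N ≤ n → 1 < Nat.gcd k (a n) → 1 < Nat.gcd k (a (n + 1)) := by
    intro n hn hg
    by_contra hcop
    have hgpos : 0 < Nat.gcd k (a (n + 1)) := Nat.gcd_pos_of_pos_left _ (by omega)
    have hcop1 : Nat.gcd k (a (n + 1)) = 1 := by omega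
    have hle := le_of_candidate ha n (by omega) k (by omega)
      (fun m h1 _ => hmiss m h1) hg hcop1
    have := hgt (n + 2) (by omega)
    omega
  -- k's smallest prime factor divides some late term
  have hp : (k.minFac).Prime := Nat.minFac_prime (by omega)
  obtain ⟨m0, hm01, hm02⟩ := prime_dvd_infinite ha k.minFac hp (N + 2)
  have hstart : 1 < Nat.gcd k (a m0) := by
    have hdvd : k.minFac ∣ Nat.gcd k (a m0) := Nat.dvd_gcd (Nat.minFac_dvd k) hm02
    have := Nat.le_of_dvd (Nat.gcd_pos_of_pos_left _ (by omega : 0 < k)) hdvd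
    have := hp.two_le
    omega
  have hall : ∀ n, m0 ≤ n → 1 < Nat.gcd k (a n) := by
    intro n hn
    induction n, hn using Nat.le_induction with
    | base => exact hstart
    | succ n hn ih => exact hblock n (by omega) ih
  -- pick a prime q > k; some large power of q appears
  obtain ⟨q, hqk, hq⟩ := Nat.exists_infinite_primes (k + 1)
  set B := Bnd a m0 with hB
  have hpow : ∃ i, 1 ≤ i ∧ B < q ^ i ∧ ∃ j, 1 ≤ j ∧ a j = q ^ i := by
    by_contra hno
    push_neg at hno
    set c := q ^ (B + 1) with hc
    have hcB : B < c := by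
      have h1 : B < 2 ^ B := (Nat.lt_two_pow_self (n := B))
      have h2 : 2 ^ B ≤ 2 ^ (B + 1) := Nat.pow_le_pow_right (by norm_num) (by omega)
      have h3 : 2 ^ (B + 1) ≤ q ^ (B + 1) := Nat.pow_le_pow_left hq.two_le _
      omega
    have hnew : ∀ j, 1 ≤ j → a j ≠ c := hno (B + 1) (by omega) hcB
    apply not_bdd ha c
    intro M'
    obtain ⟨s, hs1, hs2⟩ := prime_dvd_infinite ha q hq (max 2 M')
    refine ⟨s + 2, by omega, by omega, ?_⟩
    apply le_of_candidate ha s (by omega) c (pow_pos (by omega) _) (fun m h1 _ => hnew m h1)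
    · have hdvd : q ∣ Nat.gcd c (a s) := Nat.dvd_gcd (dvd_pow_self q (by omega)) hs2
      have hpos : 0 < a s := pos ha s (by omega)
      have := Nat.le_of_dvd (Nat.gcd_pos_of_pos_right c hpos) hdvd
      have := hq.two_le
      omega
    · have hcc : Nat.gcd (a (s + 1)) (a s) = 1 := coprime_consec ha s (by omega)
      have hqcop : Nat.Coprime q (a (s + 1)) := by
        refine (Nat.Prime.coprime_iff_not_dvd hq).2 (fun hdvd => ?_)
        have : q ∣ Nat.gcd (a (s + 1)) (a s) := Nat.dvd_gcd hdvd hs2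
        rw [hcc, Nat.dvd_one] at this
        exact hq.one_lt.ne' this
      exact Nat.Coprime.pow_left _ hqcop
  obtain ⟨i, hi1, hiB, j, hj1, hj2⟩ := hpow
  -- the index of that power is late, so q ∣ k, contradiction
  have hjm : m0 < j := by
    by_contra hcon
    push_neg at hcon
    have := le_Bnd a m0 j hj1 hcon
    omega
  have hgcd := hall j (by omega)
  rw [hj2] at hgcd
  set r := (Nat.gcd k (q ^ i)).minFac with hr
  have hrp : r.Prime := Nat.minFac_prime (by omega)
  have hrk : r ∣ k := (Nat.minFac_dvd _).trans (Nat.gcd_dvd_left _ _)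
  have hrq : r ∣ q ^ i := (Nat.minFac_dvd _).trans (Nat.gcd_dvd_right _ _)
  have hrq2 : r = q := (Nat.prime_dvd_prime_iff_eq hrp hq).1 (hrp.dvd_of_dvd_pow hrq)
  have : q ≤ k := Nat.le_of_dvd (by omega) (hrq2 ▸ hrk)
  omega

end YSAux

theorem yellowstone_is_permutation (a : ℕ → ℕ) (ha : IsYellowstone a) :
    Set.BijOn a {n : ℕ | 1 ≤ n} {k : ℕ | 1 ≤ k} := by
  refine ⟨fun n hn => YSAux.pos ha n hn, YSAux.injOn ha, ?_⟩
  intro k hk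
  obtain ⟨n, hn1, hn2⟩ := YSAux.surj ha k hk
  exact ⟨n, hn1, hn2⟩
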